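/- Let (C, d, U, D₁, D₂) be a Floer datum over a field Λ, with Ĉ, Č, C̄, the maps i, j, p, and the maps 𝔨, 𝔩, 𝔯 as defined in the context. Then the following three identities hold: p ∘ j + 𝔨 ∘ ď = 0, i ∘ p + 𝔩 ∘ d̂ + ď ∘ 𝔩 = 0, and j ∘ i + d̂ ∘ 𝔯 = 0. -/

import Mathlib

noncomputable section

variable (Λ : Type*) (V : Type*) [Field Λ] [AddCommGroup V] [Module Λ V]

/-- A Floer datum over the field `Λ`. -/
structure FloerDatum where
  gr : ZMod 8 → Submodule Λ V
  internal : DirectSum.IsInternal gr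
  d : V →ₗ[Λ] V
  U : V →ₗ[Λ] V
  D₁ : V →ₗ[Λ] Λ
  D₂ : Λ →ₗ[Λ] V
  d_mem : ∀ (i : ZMod 8), ∀ v ∈ gr i, d v ∈ gr (i - 1)
  U_mem : ∀ (i : ZMod 8), ∀ v ∈ gr i, U v ∈ gr (i - 4)
  D₁_vanish : ∀ (i : ZMod 8), i ≠ 1 → ∀ v ∈ gr i, D₁ v = 0
  D₂_mem : ∀ a : Λ, D₂ a ∈ gr 4
  d_d : d ∘ₗ d = 0
  D₁_d : D₁ ∘ₗ d = 0
  d_D₂ : d ∘ₗ D₂ = 0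
  U_rel : U ∘ₗ d - d ∘ₗ U + D₂ ∘ₗ D₁ = 0

variable {Λ V}
variable {W : Type*} [AddCommGroup W] [Module Λ W]
variable {M : Type*} [AddCommGroup M] [Module Λ M]

/-- `p = Σ aᵢ xⁱ ↦ Σ f i aᵢ`, as a linear map on polynomials. -/
def polySum (f : ℕ → (Λ →ₗ[Λ] W)) : Polynomial Λ →ₗ[Λ] W where
  toFun p := p.sum fun i a => f i a
  map_add' p q :=
    Polynomial.sum_add_index p q _ (fun i => map_zero (f i)) (fun i b c => map_add (f i) b c)
  map_smul' a p := by
    show (a • p).sum (fun i b => f i b) = a • p.sum fun i b => f i b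
    rw [Polynomial.sum_smul_index p a _ (fun i => map_zero (f i)),
      Polynomial.sum, Polynomial.sum, Finset.smul_sum]
    exact Finset.sum_congr rfl fun n _ => by rw [← smul_eq_mul, map_smul]

/-- The differential `d̂` on `Ĉ = C ⊕ Λ[x]`. -/
def hatd (F : FloerDatum Λ V) : (V × Polynomial Λ) →ₗ[Λ] (V × Polynomial Λ) :=
  ((F.d ∘ₗ LinearMap.fst Λ V (Polynomial Λ))
    - (polySum fun i => (F.U ^ i) ∘ₗ F.D₂) ∘ₗ LinearMap.snd Λ V (Polynomial Λ)).prod 0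

/-- The map `X̂(α, p) = (U α, D₁ α + x·p)` on `Ĉ`. -/
def hatX (F : FloerDatum Λ V) : (V × Polynomial Λ) →ₗ[Λ] (V × Polynomial Λ) :=
  (F.U ∘ₗ LinearMap.fst Λ V (Polynomial Λ)).prod
    ((Algebra.linearMap Λ (Polynomial Λ)) ∘ₗ F.D₁ ∘ₗ LinearMap.fst Λ V (Polynomial Λ)
      + (LinearMap.mulLeft Λ (Polynomial.X : Polynomial Λ)) ∘ₗ LinearMap.snd Λ V (Polynomial Λ))

/-- Package a family of `Λ`-linear coefficient functionals into a linear map to power series.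
We use `PowerSeries Λ` (in the variable `x⁻¹`) as a model for `x⁻¹Λ[[x⁻¹]]`: a power series `q`
represents the series `Σ_{n≥0} (coeff n q) x^{-(n+1)}`. -/
def toPS (c : ℕ → (M →ₗ[Λ] Λ)) : M →ₗ[Λ] PowerSeries Λ where
  toFun m := PowerSeries.mk fun n => c n m
  map_add' x y := by
    ext n
    simp [PowerSeries.coeff_mk]
  map_smul' a x := by
    ext n
    simp [PowerSeries.coeff_mk]

/-- The differential `ď` on `Č = C ⊕ x⁻¹Λ[[x⁻¹]]`. -/
def checkd (F : FloerDatum Λ V) : (V × PowerSeries Λ) →ₗ[Λ] (V × PowerSeries Λ) :=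
  (F.d ∘ₗ LinearMap.fst Λ V (PowerSeries Λ)).prod
    ((toPS fun n => F.D₁ ∘ₗ (F.U ^ n)) ∘ₗ LinearMap.fst Λ V (PowerSeries Λ))

/-- The map `X̌` on `Č`. -/
def checkX (F : FloerDatum Λ V) : (V × PowerSeries Λ) →ₗ[Λ] (V × PowerSeries Λ) :=
  (F.U ∘ₗ LinearMap.fst Λ V (PowerSeries Λ)
      + F.D₂ ∘ₗ (PowerSeries.coeff (R := Λ) 0) ∘ₗ LinearMap.snd Λ V (PowerSeries Λ)).prod
    ((toPS fun n => PowerSeries.coeff (R := Λ) (n + 1)) ∘ₗ LinearMap.snd Λ V (PowerSeries Λ))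

/-!
We model `C̄ = Λ((x⁻¹))` by `LaurentSeries Λ = HahnSeries ℤ Λ` in the variable `t = x⁻¹`;
a Laurent series `z` represents `Σ_i aᵢ xⁱ` with `aᵢ = z.coeff (-i)`, and `x` acts by
multiplication by `xbar = single (-1) 1`.
-/

/-- The element `x` of `C̄ = Λ((x⁻¹))`. -/
def xbar : LaurentSeries Λ := HahnSeries.single (-1 : ℤ) (1 : Λ)

lemma headSupport_finite (f : ℕ → (Λ →ₗ[Λ] W)) (z : LaurentSeries Λ) :
    (Function.support fun n : ℕ => f n (z.coeff (-(n : ℤ)))).Finite := by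
  have h1 : (z.support ∩ Set.Iic (0 : ℤ)).Finite := by
    rcases Set.eq_empty_or_nonempty (z.support ∩ Set.Iic (0 : ℤ)) with h | h
    · simp [h]
    · have hwf : (z.support ∩ Set.Iic (0 : ℤ)).IsWF :=
        z.isWF_support.mono Set.inter_subset_left
      exact Set.Finite.subset (Set.finite_Icc (hwf.min h) 0)
        (fun y hy => Set.mem_Icc.mpr ⟨hwf.min_le h hy, hy.2⟩)
  have hinj : Function.Injective fun n : ℕ => -(n : ℤ) := fun a b hab => by
    simpa using hab
  refine Set.Finite.subset (Set.Finite.preimage (hinj.injOn) h1) ?_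
  intro n hn
  have hz : z.coeff (-(n : ℤ)) ≠ 0 := by
    intro h0
    apply hn
    simp [h0]
  exact Set.mem_preimage.mpr ⟨hz, by simp⟩

/-- `z = Σ aᵢ xⁱ ↦ Σ_{i ≥ 0} f i aᵢ`, as a linear map on Laurent series (the sum is finite). -/
def headMap (f : ℕ → (Λ →ₗ[Λ] W)) : LaurentSeries Λ →ₗ[Λ] W where
  toFun z := ∑ᶠ n : ℕ, f n (z.coeff (-(n : ℤ)))
  map_add' z w := by
    show (∑ᶠ n : ℕ, f n ((z + w).coeff (-(n : ℤ))))
        = (∑ᶠ n : ℕ, f n (z.coeff (-(n : ℤ)))) + ∑ᶠ n : ℕ, f n (w.coeff (-(n : ℤ)))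
    rw [← finsum_add_distrib (headSupport_finite f z) (headSupport_finite f w)]
    exact finsum_congr fun n => by rw [HahnSeries.coeff_add, map_add]
  map_smul' a z := by
    show (∑ᶠ n : ℕ, f n ((a • z).coeff (-(n : ℤ)))) = a • ∑ᶠ n : ℕ, f n (z.coeff (-(n : ℤ)))
    rw [smul_finsum]
    exact finsum_congr fun n => by rw [HahnSeries.coeff_smul, map_smul]

/-- The coefficient of `xⁱ` (i.e. of `t^{-i}`), as a linear functional on Laurent series. -/
def lcoeff (k : ℤ) : LaurentSeries Λ →ₗ[Λ] Λ where
  toFun z := z.coeff k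
  map_add' _ _ := HahnSeries.coeff_add
  map_smul' _ _ := HahnSeries.coeff_smul

/-- A power series `q`, viewed as `Σ_{n≥0} (coeff n q) x^{-(n+1)}`, embedded into `Λ((x⁻¹))`
(multiplying the usual embedding by `t = x⁻¹`). -/
def psToLaurentShift : PowerSeries Λ →ₗ[Λ] LaurentSeries Λ where
  toFun q := HahnSeries.single (1 : ℤ) (1 : Λ) * (HahnSeries.ofPowerSeries ℤ Λ q)
  map_add' q r := by
    show HahnSeries.single (1 : ℤ) (1 : Λ) * (HahnSeries.ofPowerSeries ℤ Λ (q + r))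
        = HahnSeries.single (1 : ℤ) (1 : Λ) * (HahnSeries.ofPowerSeries ℤ Λ q)
          + HahnSeries.single (1 : ℤ) (1 : Λ) * (HahnSeries.ofPowerSeries ℤ Λ r)
    rw [map_add, mul_add]
  map_smul' a q := by
    show HahnSeries.single (1 : ℤ) (1 : Λ) * (HahnSeries.ofPowerSeries ℤ Λ (a • q))
        = a • (HahnSeries.single (1 : ℤ) (1 : Λ) * HahnSeries.ofPowerSeries ℤ Λ q)
    rw [PowerSeries.smul_eq_C_mul, map_mul, HahnSeries.ofPowerSeries_C, HahnSeries.C_apply,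
      mul_left_comm, HahnSeries.single_zero_mul_eq_smul]

/-- A polynomial `Σ aᵢ xⁱ`, viewed inside `Λ((x⁻¹))` by substituting `x = t⁻¹`. -/
def polyToLaurent : Polynomial Λ →ₗ[Λ] LaurentSeries Λ :=
  polySum fun n => LinearMap.smulRight (LinearMap.id : Λ →ₗ[Λ] Λ) ((xbar : LaurentSeries Λ) ^ n)

/-- The map `i : C̄ → Č`. -/
def imap (F : FloerDatum Λ V) : LaurentSeries Λ →ₗ[Λ] (V × PowerSeries Λ) :=
  (headMap fun n => (F.U ^ n) ∘ₗ F.D₂).prod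
    (toPS fun n => lcoeff ((n : ℤ) + 1))

/-- The map `j : Č → Ĉ`, `(α, q) ↦ (α, 0)`. -/
def jmap : (V × PowerSeries Λ) →ₗ[Λ] (V × Polynomial Λ) :=
  (LinearMap.fst Λ V (PowerSeries Λ)).prod 0

/-- The map `p : Ĉ → C̄`,
`(α, Σ_{i≥0} aᵢ xⁱ) ↦ Σ_{i≤-1} D₁(U^{-i-1} α) xⁱ + Σ_{i≥0} aᵢ xⁱ`. -/
def pmap (F : FloerDatum Λ V) : (V × Polynomial Λ) →ₗ[Λ] LaurentSeries Λ :=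
  (psToLaurentShift ∘ₗ (toPS fun n => F.D₁ ∘ₗ (F.U ^ n))) ∘ₗ LinearMap.fst Λ V (Polynomial Λ)
    + polyToLaurent ∘ₗ LinearMap.snd Λ V (Polynomial Λ)

/-- The map `𝔨 : Č → C̄`, `(α, Σ_{i≤-1} aᵢ xⁱ) ↦ -Σ_{i≤-1} aᵢ xⁱ`. -/
def kmap : (V × PowerSeries Λ) →ₗ[Λ] LaurentSeries Λ :=
  -(psToLaurentShift ∘ₗ LinearMap.snd Λ V (PowerSeries Λ))

/-- The map `𝔩 : Ĉ → Č`, `(α, p) ↦ (ε α, 0)`, for a sign map `ε`. -/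
def lmap (ε : V →ₗ[Λ] V) : (V × Polynomial Λ) →ₗ[Λ] (V × PowerSeries Λ) :=
  (ε ∘ₗ LinearMap.fst Λ V (Polynomial Λ)).prod 0

/-- The map `𝔯 : C̄ → Ĉ`, `Σ_{i≤N} aᵢ xⁱ ↦ (0, Σ_{0≤i≤N} aᵢ xⁱ)`. -/
def rmap : LaurentSeries Λ →ₗ[Λ] (V × Polynomial Λ) :=
  (0 : LaurentSeries Λ →ₗ[Λ] V).prod
    (headMap fun n => LinearMap.smulRight (LinearMap.id : Λ →ₗ[Λ] Λ) ((Polynomial.X : Polynomial Λ) ^ n))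


section Aux

open Polynomial

/-! ### Basic apply lemmas -/

lemma toPS_coeff (c : ℕ → (M →ₗ[Λ] Λ)) (m : M) (n : ℕ) :
    PowerSeries.coeff n (toPS c m) = c n m := by
  simp [toPS]

lemma lcoeff_apply (k : ℤ) (z : LaurentSeries Λ) : lcoeff k z = z.coeff k := rfl

lemma headMap_apply (f : ℕ → (Λ →ₗ[Λ] W)) (z : LaurentSeries Λ) :
    headMap f z = ∑ᶠ n : ℕ, f n (z.coeff (-(n : ℤ))) := rfl

lemma polySum_apply (f : ℕ → (Λ →ₗ[Λ] W)) (p : Polynomial Λ) :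
    polySum f p = p.sum fun i a => f i a := rfl

lemma polySum_monomial (f : ℕ → (Λ →ₗ[Λ] W)) (n : ℕ) (a : Λ) :
    polySum f (monomial n a) = f n a := by
  rw [polySum_apply]
  exact Polynomial.sum_monomial_index a (fun i b => f i b) (map_zero _)

lemma comp_polySum (g : W →ₗ[Λ] M) (f : ℕ → (Λ →ₗ[Λ] W)) :
    g ∘ₗ polySum f = polySum (fun n => g ∘ₗ f n) := by
  refine Polynomial.lhom_ext' fun n => LinearMap.ext fun a => ?_
  simp only [LinearMap.comp_apply, polySum_monomial]

lemma shift_apply (q : PowerSeries Λ) :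
    psToLaurentShift q = HahnSeries.single (1:ℤ) (1:Λ) * HahnSeries.ofPowerSeries ℤ Λ q := rfl

lemma ofPS_coeff_neg (q : PowerSeries Λ) {m : ℤ} (hm : m < 0) :
    (HahnSeries.ofPowerSeries ℤ Λ q).coeff m = 0 := by
  rw [HahnSeries.ofPowerSeries_apply]
  apply HahnSeries.embDomain_notin_range
  rintro ⟨n, hn⟩
  have hn' : ((n : ℤ)) = m := hn
  omega

lemma shift_coeff_nonpos (q : PowerSeries Λ) {k : ℤ} (hk : k ≤ 0) :
    (psToLaurentShift q).coeff k = 0 := by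
  rw [shift_apply, show k = (k-1) + 1 by ring, HahnSeries.coeff_single_mul_add, one_mul,
    ofPS_coeff_neg q (by omega)]

lemma shift_coeff_succ (q : PowerSeries Λ) (n : ℕ) :
    (psToLaurentShift q).coeff ((n:ℤ) + 1) = PowerSeries.coeff n q := by
  rw [shift_apply, HahnSeries.coeff_single_mul_add, one_mul, HahnSeries.ofPowerSeries_apply_coeff]

lemma headMap_shift (f : ℕ → (Λ →ₗ[Λ] W)) (q : PowerSeries Λ) :
    headMap f (psToLaurentShift q) = 0 := by
  rw [headMap_apply]
  apply finsum_eq_zero_of_forall_eq_zero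
  intro n
  rw [shift_coeff_nonpos q (by omega), map_zero]

lemma xbar_pow (n : ℕ) : (xbar : LaurentSeries Λ) ^ n = HahnSeries.single (-(n:ℤ)) 1 := by
  rw [xbar, HahnSeries.single_pow]
  simp

lemma polyToLaurent_monomial (n : ℕ) (a : Λ) :
    polyToLaurent (monomial n a) = a • (HahnSeries.single (-(n:ℤ)) (1:Λ) : LaurentSeries Λ) := by
  rw [polyToLaurent, polySum_monomial, ← xbar_pow]
  simp

lemma headMap_polyToLaurent_apply (f : ℕ → (Λ →ₗ[Λ] W)) (P : Polynomial Λ) :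
    headMap f (polyToLaurent P) = polySum f P := by
  have : headMap f ∘ₗ polyToLaurent = polySum f := by
    refine Polynomial.lhom_ext' fun n => LinearMap.ext fun a => ?_
    rw [LinearMap.comp_apply, LinearMap.comp_apply, polyToLaurent_monomial,
      LinearMap.comp_apply, polySum_monomial, headMap_apply]
    rw [finsum_eq_single _ n ?side]
    · simp [HahnSeries.coeff_smul, HahnSeries.coeff_single]
    case side =>
      intro m hm
      have h0 : ((HahnSeries.single (-(n:ℤ)) (1:Λ)) : LaurentSeries Λ).coeff (-(m:ℤ)) = 0 := by
        rw [HahnSeries.coeff_single]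
        simp only [neg_inj, Nat.cast_inj]
        rw [if_neg hm]
      rw [HahnSeries.coeff_smul, h0, smul_zero, map_zero]
  exact DFunLike.congr_fun this P

lemma toPS_lc_polyToLaurent_apply (P : Polynomial Λ) :
    (toPS fun n => (lcoeff ((n:ℤ) + 1) : LaurentSeries Λ →ₗ[Λ] Λ)) (polyToLaurent P) = 0 := by
  have : (toPS fun n => (lcoeff ((n:ℤ) + 1) : LaurentSeries Λ →ₗ[Λ] Λ)) ∘ₗ polyToLaurent = 0 := by
    refine Polynomial.lhom_ext' fun m => LinearMap.ext fun a => ?_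
    refine PowerSeries.ext fun n => ?_
    simp only [LinearMap.comp_apply, LinearMap.zero_apply, map_zero]
    rw [polyToLaurent_monomial, toPS_coeff, _root_.lcoeff_apply, HahnSeries.coeff_smul,
      HahnSeries.coeff_single, if_neg (by omega), smul_zero]
  exact DFunLike.congr_fun this P

lemma toPS_lc_shift_apply (q : PowerSeries Λ) :
    (toPS fun n => (lcoeff ((n:ℤ) + 1) : LaurentSeries Λ →ₗ[Λ] Λ)) (psToLaurentShift q) = q := by
  refine PowerSeries.ext fun n => ?_
  rw [toPS_coeff, _root_.lcoeff_apply, shift_coeff_succ]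

lemma polySum_headMapX (f : ℕ → (Λ →ₗ[Λ] W)) (z : LaurentSeries Λ) :
    polySum f (headMap (fun n => LinearMap.smulRight (LinearMap.id : Λ →ₗ[Λ] Λ)
      ((Polynomial.X : Polynomial Λ) ^ n)) z) = headMap f z := by
  classical
  set g : ℕ → (Λ →ₗ[Λ] Polynomial Λ) :=
    fun n => LinearMap.smulRight (LinearMap.id : Λ →ₗ[Λ] Λ) ((Polynomial.X : Polynomial Λ) ^ n)
    with hg
  have hfin := headSupport_finite g z
  have h1 : headMap g z = ∑ n ∈ hfin.toFinset, z.coeff (-(n:ℤ)) • (Polynomial.X : Polynomial Λ)^n := by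
    rw [headMap_apply, finsum_eq_finset_sum_of_support_subset _
      (fun x hx => (Set.Finite.mem_toFinset hfin).2 hx)]
    exact Finset.sum_congr rfl fun n _ => by simp [hg]
  rw [h1, map_sum, headMap_apply,
    finsum_eq_finset_sum_of_support_subset _ (s := hfin.toFinset) ?hsub]
  · refine Finset.sum_congr rfl fun n _ => ?_
    rw [Polynomial.smul_eq_C_mul, Polynomial.C_mul_X_pow_eq_monomial, polySum_monomial]
  case hsub =>
    intro n hn
    simp only [Function.mem_support] at hn
    have hc : z.coeff (-(n:ℤ)) ≠ 0 := fun h => hn (by rw [h, map_zero])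
    simp only [Set.Finite.coe_toFinset, Function.mem_support, hg]
    simp only [LinearMap.smulRight_apply, LinearMap.id_coe, id_eq]
    exact smul_ne_zero hc (pow_ne_zero _ Polynomial.X_ne_zero)

end Aux


section Eps

lemma FloerDatum.ext_gr (F : FloerDatum Λ V) {f g : V →ₗ[Λ] W}
    (h : ∀ k : ZMod 8, ∀ v ∈ F.gr k, f v = g v) : f = g := by
  ext v
  have hv : v ∈ ⨆ k, F.gr k := by rw [F.internal.submodule_iSup_eq_top]; exact Submodule.mem_top
  refine Submodule.iSup_induction (motive := fun v => f v = g v) F.gr hv h (by simp) ?_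
  intro x y hx hy
  rw [map_add, map_add, hx, hy]

lemma zmod8_parity : ∀ j : ZMod 8, ((j-1).val + j.val) % 2 = 1 ∧ ((j-4).val + j.val) % 2 = 0 := by
  decide

lemma neg_one_pow_sub_one (k : ZMod 8) : ((-1:Λ))^((k-1).val) = -(-1:Λ)^(k.val) := by
  have h := (zmod8_parity k).1
  rcases Nat.even_or_odd k.val with he | ho
  · have ho' : Odd ((k-1).val) := by
      rw [Nat.odd_iff]; rw [Nat.even_iff] at he; omega
    rw [he.neg_one_pow, ho'.neg_one_pow]
  · have he' : Even ((k-1).val) := by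
      rw [Nat.even_iff]; rw [Nat.odd_iff] at ho; omega
    rw [ho.neg_one_pow, he'.neg_one_pow, neg_neg]

lemma neg_one_pow_sub_four (k : ZMod 8) : ((-1:Λ))^((k-4).val) = (-1:Λ)^(k.val) := by
  have h := (zmod8_parity k).2
  rcases Nat.even_or_odd k.val with he | ho
  · have he' : Even ((k-4).val) := by
      rw [Nat.even_iff]; rw [Nat.even_iff] at he; omega
    rw [he.neg_one_pow, he'.neg_one_pow]
  · have ho' : Odd ((k-4).val) := by
      rw [Nat.odd_iff]; rw [Nat.odd_iff] at ho; omega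
    rw [ho.neg_one_pow, ho'.neg_one_pow]

variable {F : FloerDatum Λ V} {ε : V →ₗ[Λ] V}

section
variable (hε : ∀ (k : ZMod 8), ∀ v ∈ F.gr k, ε v = ((-1 : Λ) ^ k.val) • v)
include hε

lemma eps_comp_d : ε ∘ₗ F.d = -(F.d ∘ₗ ε) := by
  refine F.ext_gr fun k v hv => ?_
  rw [LinearMap.comp_apply, LinearMap.neg_apply, LinearMap.comp_apply,
    hε (k-1) _ (F.d_mem k v hv), hε k v hv, map_smul, neg_one_pow_sub_one, neg_smul]

lemma eps_comp_U : ε ∘ₗ F.U = F.U ∘ₗ ε := by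
  refine F.ext_gr fun k v hv => ?_
  rw [LinearMap.comp_apply, LinearMap.comp_apply,
    hε (k-4) _ (F.U_mem k v hv), hε k v hv, map_smul, neg_one_pow_sub_four]

lemma eps_comp_D₂ : ε ∘ₗ F.D₂ = F.D₂ := by
  refine LinearMap.ext fun a => ?_
  rw [LinearMap.comp_apply, hε 4 _ (F.D₂_mem a)]
  norm_num [show ((4:ZMod 8)).val = 4 from rfl]

lemma D₁_comp_eps : F.D₁ ∘ₗ ε = -F.D₁ := by
  refine F.ext_gr fun k v hv => ?_
  rw [LinearMap.comp_apply, LinearMap.neg_apply, hε k v hv, map_smul]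
  by_cases hk : k = 1
  · subst hk
    norm_num [show ((1:ZMod 8)).val = 1 from rfl]
  · rw [F.D₁_vanish k hk v hv]
    simp

lemma eps_comp_Upow (n : ℕ) : ε ∘ₗ (F.U ^ n) = (F.U ^ n) ∘ₗ ε := by
  induction n with
  | zero => rw [pow_zero, Module.End.one_eq_id, LinearMap.comp_id, LinearMap.id_comp]
  | succ n ih =>
      rw [pow_succ, Module.End.mul_eq_comp, ← LinearMap.comp_assoc, ih,
        LinearMap.comp_assoc, eps_comp_U hε, ← LinearMap.comp_assoc]

lemma eps_comp_UD₂ (n : ℕ) : ε ∘ₗ ((F.U ^ n) ∘ₗ F.D₂) = (F.U ^ n) ∘ₗ F.D₂ := by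
  rw [← LinearMap.comp_assoc, eps_comp_Upow hε, LinearMap.comp_assoc, eps_comp_D₂ hε]

lemma D₁Upow_comp_eps (n : ℕ) : (F.D₁ ∘ₗ (F.U ^ n)) ∘ₗ ε = -(F.D₁ ∘ₗ (F.U ^ n)) := by
  rw [LinearMap.comp_assoc, ← eps_comp_Upow hε, ← LinearMap.comp_assoc, D₁_comp_eps hε,
    LinearMap.neg_comp]

end
end Eps

/-- The identities `p ∘ j + 𝔨 ∘ ď = 0`, `i ∘ p + 𝔩 ∘ d̂ + ď ∘ 𝔩 = 0` and `j ∘ i + d̂ ∘ 𝔯 = 0`,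
where `ε : C → C` is the `Λ`-linear map acting on `C_k` by `(-1)^k`. -/
theorem stmt_4 (F : FloerDatum Λ V) (ε : V →ₗ[Λ] V)
    (hε : ∀ (k : ZMod 8), ∀ v ∈ F.gr k, ε v = ((-1 : Λ) ^ k.val) • v) :
    pmap F ∘ₗ jmap + kmap ∘ₗ checkd F = 0 ∧
    imap F ∘ₗ pmap F + lmap ε ∘ₗ hatd F + checkd F ∘ₗ lmap ε = 0 ∧
    jmap ∘ₗ imap F + hatd F ∘ₗ rmap = 0 := by
  refine ⟨?_, ?_, ?_⟩
  · refine LinearMap.ext fun z => ?_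
    obtain ⟨α, q⟩ := z
    simp [pmap, jmap, kmap, checkd]
  · refine LinearMap.ext fun z => ?_
    obtain ⟨α, P⟩ := z
    simp only [LinearMap.add_apply, LinearMap.comp_apply, LinearMap.zero_apply]
    have hpmap : pmap F (α, P)
        = psToLaurentShift ((toPS fun n => F.D₁ ∘ₗ F.U ^ n) α) + polyToLaurent P := by
      simp [pmap]
    have hhatd : hatd F (α, P)
        = (F.d α - polySum (fun i => (F.U ^ i) ∘ₗ F.D₂) P, (0 : Polynomial Λ)) := by
      simp [hatd]
    have hcheckd : checkd F ((ε α, (0 : PowerSeries Λ)))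
        = (F.d (ε α), (toPS fun n => F.D₁ ∘ₗ F.U ^ n) (ε α)) := by
      simp [checkd]
    have himap : imap F (psToLaurentShift ((toPS fun n => F.D₁ ∘ₗ F.U ^ n) α) + polyToLaurent P)
        = (polySum (fun n => (F.U ^ n) ∘ₗ F.D₂) P, (toPS fun n => F.D₁ ∘ₗ F.U ^ n) α) := by
      simp only [imap, LinearMap.prod_apply, Function.prod, LinearMap.comp_apply, map_add,
        headMap_shift, headMap_polyToLaurent_apply, toPS_lc_shift_apply,
        toPS_lc_polyToLaurent_apply, Prod.mk_add_mk, zero_add, add_zero]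
    rw [hpmap, himap, hhatd]
    simp only [lmap, LinearMap.prod_apply, Function.prod, LinearMap.comp_apply, LinearMap.fst_apply,
      LinearMap.zero_apply]
    rw [hcheckd]
    have hA : ε ∘ₗ polySum (fun n => (F.U ^ n) ∘ₗ F.D₂) = polySum (fun n => (F.U ^ n) ∘ₗ F.D₂) := by
      rw [comp_polySum]
      exact congrArg polySum (funext fun n => eps_comp_UD₂ hε n)
    have hAP : ε (polySum (fun n => (F.U ^ n) ∘ₗ F.D₂) P) = polySum (fun n => (F.U ^ n) ∘ₗ F.D₂) P :=
      DFunLike.congr_fun hA P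
    have hB : ε (F.d α) = -(F.d (ε α)) := by
      simpa using DFunLike.congr_fun (eps_comp_d hε) α
    have hC : (toPS fun n => F.D₁ ∘ₗ F.U ^ n) (ε α) = -((toPS fun n => F.D₁ ∘ₗ F.U ^ n) α) := by
      refine PowerSeries.ext fun n => ?_
      rw [toPS_coeff, map_neg, toPS_coeff]
      simpa using DFunLike.congr_fun (D₁Upow_comp_eps hε n) α
    rw [map_sub, hAP, hB, hC, Prod.mk_add_mk, Prod.mk_add_mk]
    refine Prod.ext ?_ ?_
    · show _ = (0 : V)
      abel_nf
      simp
    · show _ = (0 : PowerSeries Λ)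
      abel
  · refine LinearMap.ext fun z => ?_
    simp only [LinearMap.add_apply, LinearMap.comp_apply, LinearMap.zero_apply]
    have h1 : rmap z = ((0 : V), headMap (fun n => LinearMap.smulRight
        (LinearMap.id : Λ →ₗ[Λ] Λ) ((Polynomial.X : Polynomial Λ) ^ n)) z) := rfl
    have h2 : jmap (imap F z) = (headMap (fun n => (F.U ^ n) ∘ₗ F.D₂) z, (0 : Polynomial Λ)) := rfl
    have h3 : ∀ Q : Polynomial Λ, hatd F ((0 : V), Q)
        = (-(polySum (fun i => (F.U ^ i) ∘ₗ F.D₂) Q), (0 : Polynomial Λ)) := by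
      intro Q; simp [hatd]
    rw [h1, h2, h3, polySum_headMapX, Prod.mk_add_mk]
    simp
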